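/- Let (M,𝓐,m) be a measure space, π : M → M̃ measurable, m̃ := π_*m. Let (ℰ,𝓗) be a closed bilinear form on L²(m) with constants α₀, K, and let ℰᵃ be an antisymmetric bilinear form on 𝓗 satisfying |ℰᵃ(u,v)| ≤ K' ℰ_{α₀+1}(u,u)^{1/2} ℰ_{α₀+1}(v,v)^{1/2} for all u,v ∈ 𝓗 and some K' < ∞; for κ ∈ ℝ set ℰ^κ := ℰ + κℰᵃ (a closed form on L²(m) with the same α₀). Define 𝓗̃ := {ũ ∈ L²(m̃) : ũ∘π ∈ 𝓗} and Ẽ(ũ,ṽ) := ℰ(ũ∘π, ṽ∘π), and assume 𝓗̃ is dense in L²(m̃). Assume moreover that for every u ∈ 𝓗: (ℰᵃ(u,v) = 0 for all v ∈ 𝓗) if and only if (there exists ũ ∈ 𝓗̃ with u = ũ∘π in L²(m)). Then for every sequence κ_n → ∞, the forms (ℰ^{κ_n}, 𝓗) Mosco-converge to (Ẽ, 𝓗̃), i.e. conditions (F1) and (F2) hold with 𝓛_n = L²(m), 𝓛 = L²(m̃) and Φ_n ũ := ũ∘π. -/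

import Mathlib

open Filter Topology
open scoped RealInnerProductSpace

set_option maxHeartbeats 2000000

noncomputable section

/-- The `𝓗`-norm associated to a bilinear form `E` with constant `α₀`:
`‖u‖_𝓗 = (ℰ^s_{α₀+1}(u,u))^{1/2} = (E(u,u) + (α₀+1)⟨u,u⟩_𝓛)^{1/2}`. -/
def Hnorm {L : Type*} [NormedAddCommGroup L] [InnerProductSpace ℝ L]
    (E : L → L → ℝ) (α₀ : ℝ) (u : L) : ℝ :=
  Real.sqrt (E u u + (α₀ + 1) * ⟪u, u⟫)

/-- `(ℰ, 𝓗)` is a closed bilinear form on the real Hilbert space `L` with constants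
`α₀ ∈ ℝ` and `K ≥ 1`: `𝓗` is a dense subspace, `E` is bilinear on `𝓗`, the symmetric part
`ℰ^s_{α₀}` is positive (hence `ℰ^s_{α₀+1}` is positive definite and dominates the `𝓛`-norm),
`𝓗` is complete for the `𝓗`-norm (ℰ.1), and the weak sector condition (ℰ.2) holds. -/
structure IsClosedForm {L : Type*} [NormedAddCommGroup L] [InnerProductSpace ℝ L]
    (E : L → L → ℝ) (H : Submodule ℝ L) (α₀ K : ℝ) : Prop where
  one_le_K : 1 ≤ K
  dense_dom : Dense (H : Set L)
  add_left : ∀ u v w : L, u ∈ H → v ∈ H → w ∈ H → E (u + v) w = E u w + E v w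
  add_right : ∀ u v w : L, u ∈ H → v ∈ H → w ∈ H → E u (v + w) = E u v + E u w
  smul_left : ∀ (c : ℝ) (u v : L), u ∈ H → v ∈ H → E (c • u) v = c * E u v
  smul_right : ∀ (c : ℝ) (u v : L), u ∈ H → v ∈ H → E u (c • v) = c * E u v
  nonneg : ∀ u ∈ H, 0 ≤ E u u + α₀ * ⟪u, u⟫
  hilbert : ∀ u : ℕ → L, (∀ n, u n ∈ H) →
      (∀ ε > (0:ℝ), ∃ N : ℕ, ∀ m ≥ N, ∀ n ≥ N, Hnorm E α₀ (u m - u n) < ε) →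
      ∃ l ∈ H, Tendsto (fun n => Hnorm E α₀ (u n - l)) atTop (𝓝 0)
  sector : ∀ u ∈ H, ∀ v ∈ H,
      |E u v + (α₀ + 1) * ⟪u, v⟫| ≤ K * Hnorm E α₀ u * Hnorm E α₀ v

/-- `Θ(u) = sup { ℰ_{α₀+1}(v,u) : v ∈ 𝓗, ‖v‖_𝓗 = 1 }`. -/
def Theta {L : Type*} [NormedAddCommGroup L] [InnerProductSpace ℝ L]
    (E : L → L → ℝ) (H : Submodule ℝ L) (α₀ : ℝ) (u : L) : ℝ :=
  sSup {x : ℝ | ∃ v ∈ H, Hnorm E α₀ v = 1 ∧ x = E v u + (α₀ + 1) * ⟪v, u⟫}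

/-- The composition operator `u ↦ u ∘ π` from `L²(π_* m)` to `L²(m)`
(a linear isometry, since `π_* m` is the pushforward of `m` by `π`). -/
def Cmp {M : Type*} [MeasurableSpace M] {N : Type*} [MeasurableSpace N]
    (m : MeasureTheory.Measure M) (π : M → N) (hπ : Measurable π)
    (u : MeasureTheory.Lp ℝ 2 (m.map π)) : MeasureTheory.Lp ℝ 2 m :=
  MeasureTheory.MemLp.toLp ((u : N → ℝ) ∘ π)
    ((MeasureTheory.memLp_map_measure_iff
        (MeasureTheory.Lp.aestronglyMeasurable u) hπ.aemeasurable).mp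
      (MeasureTheory.Lp.memLp u))


section AuxHilbert
/-- Ultrafilter limit of an eventually bounded real sequence. -/
lemma ulim_real (U : Ultrafilter ℕ) {f : ℕ → ℝ} {C : ℝ}
    (h : ∀ᶠ n in (U : Filter ℕ), |f n| ≤ C) :
    ∃ x : ℝ, |x| ≤ C ∧ Tendsto f (U : Filter ℕ) (𝓝 x) := by
  have hmem : Set.Icc (-C) C ∈ Ultrafilter.map f U := by
    rw [Ultrafilter.mem_map]
    filter_upwards [h] with n hn
    exact abs_le.mp hn
  obtain ⟨x, hx, hle⟩ := (isCompact_Icc (a := -C) (b := C)).ultrafilter_le_nhds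
    (Ultrafilter.map f U) (le_principal_iff.mpr hmem)
  exact ⟨x, abs_le.mpr hx, hle⟩

/-- Weak ultrafilter limit of a bounded sequence in a real Hilbert space. -/
lemma weak_ulim {W : Type*} [NormedAddCommGroup W] [InnerProductSpace ℝ W] [CompleteSpace W]
    (U : Ultrafilter ℕ) (s : ℕ → W) (C : ℝ)
    (hb : ∀ᶠ n in (U : Filter ℕ), ‖s n‖ ≤ C) :
    ∃ z : W, ∀ f : W →L[ℝ] ℝ, Tendsto (fun n => f (s n)) (U : Filter ℕ) (𝓝 (f z)) := by
  have key : ∀ φ : W, ∃ x : ℝ, |x| ≤ C * ‖φ‖ ∧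
      Tendsto (fun n => ⟪φ, s n⟫) (U : Filter ℕ) (𝓝 x) := by
    intro φ
    apply ulim_real U
    filter_upwards [hb] with n hn
    calc |⟪φ, s n⟫| ≤ ‖φ‖ * ‖s n‖ := abs_real_inner_le_norm _ _
      _ ≤ C * ‖φ‖ := by nlinarith [norm_nonneg φ]
  choose g hgb hgt using key
  have hCnn : 0 ≤ C := by
    obtain ⟨n, hn⟩ := hb.exists
    exact le_trans (norm_nonneg _) hn
  have hadd : ∀ φ ψ : W, g (φ + ψ) = g φ + g ψ := by
    intro φ ψ
    refine tendsto_nhds_unique (hgt (φ + ψ)) ?_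
    have := (hgt φ).add (hgt ψ)
    simpa [inner_add_left] using this
  have hsmul : ∀ (c : ℝ) (φ : W), g (c • φ) = c * g φ := by
    intro c φ
    refine tendsto_nhds_unique (hgt (c • φ)) ?_
    have := (hgt φ).const_mul c
    simpa [real_inner_smul_left, mul_comm] using this
  let gl : W →ₗ[ℝ] ℝ :=
    { toFun := g, map_add' := hadd, map_smul' := by simp [hsmul] }
  have hglb : ∀ φ : W, ‖gl φ‖ ≤ C * ‖φ‖ := by
    intro φ; simpa [gl, Real.norm_eq_abs] using hgb φ
  let gc : W →L[ℝ] ℝ := gl.mkContinuous C hglb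
  refine ⟨(InnerProductSpace.toDual ℝ W).symm gc, ?_⟩
  intro f
  set r : W := (InnerProductSpace.toDual ℝ W).symm f with hr
  have hfr : ∀ x : W, f x = ⟪r, x⟫ := by
    intro x; rw [hr, InnerProductSpace.toDual_symm_apply]
  have h1 : Tendsto (fun n => ⟪r, s n⟫) (U : Filter ℕ) (𝓝 (g r)) := hgt r
  have h2 : g r = f ((InnerProductSpace.toDual ℝ W).symm gc) := by
    have : ⟪(InnerProductSpace.toDual ℝ W).symm gc, r⟫ = gc r :=
      InnerProductSpace.toDual_symm_apply
    rw [hfr, real_inner_comm, this]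
    rfl
  rw [← h2]
  simpa [hfr] using h1

/-- Lax–Milgram-type solvability for a coercive continuous bilinear form. -/
lemma exists_laxMilgram {W : Type*} [NormedAddCommGroup W] [InnerProductSpace ℝ W]
    [CompleteSpace W] (B : W →L[ℝ] W →L[ℝ] ℝ) (hcoer : ∀ x, ‖x‖ ^ 2 ≤ B x x)
    (f : W →L[ℝ] ℝ) : ∃ v : W, ∀ φ : W, B v φ = f φ := by
  have hc : IsCoercive B := by
    refine ⟨1, one_pos, fun u => ?_⟩
    have := hcoer u
    nlinarith [norm_nonneg u]
  refine ⟨hc.continuousLinearEquivOfBilin.symm ((InnerProductSpace.toDual ℝ W).symm f), ?_⟩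
  intro φ
  have h1 := hc.continuousLinearEquivOfBilin_apply
    (hc.continuousLinearEquivOfBilin.symm ((InnerProductSpace.toDual ℝ W).symm f)) φ
  rw [← h1, ContinuousLinearEquiv.apply_symm_apply, InnerProductSpace.toDual_symm_apply]

/-- Convergence against continuous functionals, from boundedness plus strong convergence
of an injective continuous linear image. -/
lemma tendsto_clm_of_bounded {W L' : Type*} [NormedAddCommGroup W] [InnerProductSpace ℝ W]
    [CompleteSpace W] [NormedAddCommGroup L'] [InnerProductSpace ℝ L']
    (j : W →L[ℝ] L') (hj : Function.Injective j) (s : ℕ → W) (w : W) (C : ℝ)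
    (hb : ∀ n, ‖s n‖ ≤ C)
    (hs : Tendsto (fun n => ‖j (s n) - j w‖) atTop (𝓝 0)) (f : W →L[ℝ] ℝ) :
    Tendsto (fun n => f (s n)) atTop (𝓝 (f w)) := by
  rw [Filter.tendsto_iff_ultrafilter]
  intro U hU
  obtain ⟨z, hz⟩ := weak_ulim U s C (Eventually.of_forall hb)
  have hzw : z = w := by
    apply hj
    have hψ : ∀ ψ : L', ⟪ψ, j z⟫ = ⟪ψ, j w⟫ := by
      intro ψ
      have h1 : Tendsto (fun n => ⟪ψ, j (s n)⟫) atTop (𝓝 ⟪ψ, j w⟫) := by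
        have hb2 : Tendsto (fun n => ⟪ψ, j (s n) - j w⟫) atTop (𝓝 0) := by
          apply squeeze_zero_norm (fun n => ?_) (by simpa using hs.const_mul ‖ψ‖)
          calc ‖⟪ψ, j (s n) - j w⟫‖ ≤ ‖ψ‖ * ‖j (s n) - j w‖ := norm_inner_le_norm _ _
            _ = ‖ψ‖ * ‖j (s n) - j w‖ := rfl
        have := hb2.add (tendsto_const_nhds (x := ⟪ψ, j w⟫))
        simpa [inner_sub_right] using this
      have h2 : Tendsto (fun n => ⟪ψ, j (s n)⟫) (U : Filter ℕ) (𝓝 ⟪ψ, j z⟫) := by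
        have := hz ((innerSL ℝ ψ).comp j)
        simpa using this
      exact tendsto_nhds_unique h2 (h1.mono_left hU)
    have h0 : ⟪j z - j w, j z - j w⟫ = 0 := by
      have := hψ (j z - j w)
      simp only [inner_sub_right] at this ⊢
      linarith [this]
    have := inner_self_eq_zero.mp h0
    exact sub_eq_zero.mp this
  rw [← hzw]
  exact hz f


end AuxHilbert

/-- Wrapper type for the domain `𝓗` of the form, to carry the `𝓗`-norm Hilbert structure
without clashing with the `L²` instances on the subtype. -/
structure HP {L : Type*} [AddCommGroup L] [Module ℝ L] (H : Submodule ℝ L) : Type _ where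
  val : L
  mem : val ∈ H

namespace HP

variable {L : Type*} [AddCommGroup L] [Module ℝ L] {H : Submodule ℝ L}

instance : Zero (HP H) := ⟨⟨0, H.zero_mem⟩⟩
instance : Add (HP H) := ⟨fun x y => ⟨x.val + y.val, H.add_mem x.mem y.mem⟩⟩
instance : Neg (HP H) := ⟨fun x => ⟨-x.val, H.neg_mem x.mem⟩⟩
instance : Sub (HP H) := ⟨fun x y => ⟨x.val - y.val, H.sub_mem x.mem y.mem⟩⟩
instance : SMul ℝ (HP H) := ⟨fun c x => ⟨c • x.val, H.smul_mem c x.mem⟩⟩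
instance : SMul ℕ (HP H) :=
  ⟨fun n x => ⟨n • x.val, H.toAddSubmonoid.nsmul_mem x.mem n⟩⟩
instance : SMul ℤ (HP H) :=
  ⟨fun n x => ⟨n • x.val, H.toAddSubgroup.zsmul_mem x.mem n⟩⟩

lemma val_injective : Function.Injective (HP.val : HP H → L) := by
  intro a b h; cases a; cases b; simpa using h

@[simp] lemma val_zero : (0 : HP H).val = 0 := rfl
@[simp] lemma val_add (x y : HP H) : (x + y).val = x.val + y.val := rfl
@[simp] lemma val_neg (x : HP H) : (-x).val = -x.val := rfl
@[simp] lemma val_sub (x y : HP H) : (x - y).val = x.val - y.val := rfl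
@[simp] lemma val_smul (c : ℝ) (x : HP H) : (c • x).val = c • x.val := rfl

instance : AddCommGroup (HP H) :=
  val_injective.addCommGroup HP.val rfl (fun _ _ => rfl) (fun _ => rfl) (fun _ _ => rfl)
    (fun _ _ => rfl) (fun _ _ => rfl)

def valHom : HP H →+ L where
  toFun := HP.val
  map_zero' := val_zero
  map_add' := val_add

instance : Module ℝ (HP H) :=
  Function.Injective.module ℝ valHom val_injective val_smul

lemma ext' {x y : HP H} (h : x.val = y.val) : x = y := val_injective h

end HP


section AuxCmp
open MeasureTheory
variable {M : Type*} [MeasurableSpace M] {N : Type*} [MeasurableSpace N]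
    (m : Measure M) (π : M → N)

lemma cmp_coe (hπ : Measurable π) (u : Lp ℝ 2 (m.map π)) :
    (Cmp m π hπ u : M → ℝ) =ᵐ[m] (u : N → ℝ) ∘ π :=
  MemLp.coeFn_toLp _

lemma qmp (hπ : Measurable π) : Measure.QuasiMeasurePreserving π m (m.map π) :=
  (MeasurePreserving.quasiMeasurePreserving ⟨hπ, rfl⟩)

lemma cmp_add (hπ : Measurable π) (a b : Lp ℝ 2 (m.map π)) :
    Cmp m π hπ (a + b) = Cmp m π hπ a + Cmp m π hπ b := by
  apply Lp.ext
  have hA := cmp_coe m π hπ (a + b)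
  have hcomp : ((a + b : Lp ℝ 2 (m.map π)) : N → ℝ) ∘ π =ᵐ[m]
      (fun x => (a : N → ℝ) (π x) + (b : N → ℝ) (π x)) := by
    have := (qmp m π hπ).ae_eq_comp (Lp.coeFn_add a b)
    exact this.trans (Eventually.of_forall (fun x => rfl))
  have hB : ((Cmp m π hπ a + Cmp m π hπ b : Lp ℝ 2 m) : M → ℝ) =ᵐ[m]
      (fun x => (a : N → ℝ) (π x) + (b : N → ℝ) (π x)) := by
    filter_upwards [Lp.coeFn_add (Cmp m π hπ a) (Cmp m π hπ b),
      cmp_coe m π hπ a, cmp_coe m π hπ b] with x h1 h2 h3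
    rw [h1, Pi.add_apply, h2, h3]; rfl
  exact (hA.trans hcomp).trans hB.symm

lemma cmp_smul (hπ : Measurable π) (c : ℝ) (a : Lp ℝ 2 (m.map π)) :
    Cmp m π hπ (c • a) = c • Cmp m π hπ a := by
  apply Lp.ext
  have hA := cmp_coe m π hπ (c • a)
  have hcomp : ((c • a : Lp ℝ 2 (m.map π)) : N → ℝ) ∘ π =ᵐ[m]
      (fun x => c * (a : N → ℝ) (π x)) := by
    have := (qmp m π hπ).ae_eq_comp (Lp.coeFn_smul c a)
    exact this.trans (Eventually.of_forall (fun x => rfl))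
  have hB : ((c • Cmp m π hπ a : Lp ℝ 2 m) : M → ℝ) =ᵐ[m]
      (fun x => c * (a : N → ℝ) (π x)) := by
    filter_upwards [Lp.coeFn_smul c (Cmp m π hπ a), cmp_coe m π hπ a] with x h1 h2
    rw [h1, Pi.smul_apply, h2]; rfl
  exact (hA.trans hcomp).trans hB.symm

lemma cmp_sub (hπ : Measurable π) (a b : Lp ℝ 2 (m.map π)) :
    Cmp m π hπ (a - b) = Cmp m π hπ a - Cmp m π hπ b := by
  have := cmp_add m π hπ b (a - b)
  simp only [add_sub_cancel] at this
  rw [this]; abel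

lemma cmp_inner (hπ : Measurable π) (a b : Lp ℝ 2 (m.map π)) :
    ⟪Cmp m π hπ a, Cmp m π hπ b⟫ = ⟪a, b⟫ := by
  rw [L2.inner_def, L2.inner_def]
  have h1 : (fun x => ⟪(Cmp m π hπ a : M → ℝ) x, (Cmp m π hπ b : M → ℝ) x⟫)
      =ᵐ[m] fun x => ⟪(a : N → ℝ) (π x), (b : N → ℝ) (π x)⟫ := by
    filter_upwards [cmp_coe m π hπ a, cmp_coe m π hπ b] with x hx hy
    rw [hx, hy]; rfl
  rw [integral_congr_ae h1]
  have h2 : AEStronglyMeasurable (fun y => ⟪(a : N → ℝ) y, (b : N → ℝ) y⟫) (m.map π) := by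
    refine ((Lp.aestronglyMeasurable a).mul (Lp.aestronglyMeasurable b)).congr
      (Eventually.of_forall (fun y => ?_))
    simp [RCLike.inner_apply, mul_comm]
  rw [integral_map hπ.aemeasurable h2]

lemma cmp_norm (hπ : Measurable π) (a : Lp ℝ 2 (m.map π)) : ‖Cmp m π hπ a‖ = ‖a‖ := by
  have h : ‖Cmp m π hπ a‖ ^ 2 = ‖a‖ ^ 2 := by
    rw [← real_inner_self_eq_norm_sq, ← real_inner_self_eq_norm_sq, cmp_inner]
  have h1 : ‖Cmp m π hπ a‖ = Real.sqrt (‖Cmp m π hπ a‖ ^ 2) := by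
    rw [Real.sqrt_sq (norm_nonneg _)]
  rw [h1, h, Real.sqrt_sq (norm_nonneg _)]

end AuxCmp

open MeasureTheory

/-- Let `(ℰ,𝓗)` be a closed bilinear form on `L²(m)` with constants
`α₀`, `K`, and `ℰᵃ` an antisymmetric bilinear form on `𝓗` with
`|ℰᵃ(u,v)| ≤ K' ℰ_{α₀+1}(u,u)^{1/2} ℰ_{α₀+1}(v,v)^{1/2}`; set `ℰ^κ := ℰ + κ ℰᵃ`.
Define `𝓗̃ := {ut ∈ L²(m̃) : ut∘π ∈ 𝓗}` and `Ẽ(ut,vt) := ℰ(ut∘π, vt∘π)`, assume `𝓗̃` is dense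
in `L²(m̃)`, and assume: for `u ∈ 𝓗`, `ℰᵃ(u,·) = 0` on `𝓗` iff `u = ut∘π` for some `ut ∈ 𝓗̃`.
Then for every sequence `κ_n → ∞` the forms `(ℰ^{κ_n},𝓗)` Mosco-converge to `(Ẽ,𝓗̃)`,
i.e. conditions (F1) and (F2) hold with `𝓛_n = L²(m)`, `𝓛 = L²(m̃)`, `Φ_n ut = ut∘π`. -/
theorem mosco_convergence_of_contracted_form
    {M : Type*} [MeasurableSpace M] {N : Type*} [MeasurableSpace N]
    (m : Measure M) (π : M → N) (hπ : Measurable π)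
    (E : Lp ℝ 2 m → Lp ℝ 2 m → ℝ) (H : Submodule ℝ (Lp ℝ 2 m)) (α₀ K : ℝ)
    (hcf : IsClosedForm E H α₀ K)
    (Ea : Lp ℝ 2 m → Lp ℝ 2 m → ℝ) (K' : ℝ)
    (hEa_add_left : ∀ u v w : Lp ℝ 2 m, u ∈ H → v ∈ H → w ∈ H →
      Ea (u + v) w = Ea u w + Ea v w)
    (hEa_smul_left : ∀ (c : ℝ), ∀ u v : Lp ℝ 2 m, u ∈ H → v ∈ H →
      Ea (c • u) v = c * Ea u v)
    (hEa_antisymm : ∀ u ∈ H, ∀ v ∈ H, Ea u v = -Ea v u)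
    (hEa_bound : ∀ u ∈ H, ∀ v ∈ H, |Ea u v| ≤ K' * Hnorm E α₀ u * Hnorm E α₀ v)
    (hasym2 : ∀ u ∈ H, ((∀ v ∈ H, Ea u v = 0) ↔
      ∃ ut : Lp ℝ 2 (m.map π), Cmp m π hπ ut ∈ H ∧ u = Cmp m π hπ ut))
    (hdense : Dense {ut : Lp ℝ 2 (m.map π) | Cmp m π hπ ut ∈ H})
    (κ : ℕ → ℝ) (hκ : Tendsto κ atTop atTop) :
    -- Condition (F1)
    (∀ (u : ℕ → Lp ℝ 2 m) (ut : Lp ℝ 2 (m.map π)),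
      (∀ n, u n ∈ H) →
      (∀ (v : ℕ → Lp ℝ 2 m) (vt : Lp ℝ 2 (m.map π)),
        Tendsto (fun n => ‖Cmp m π hπ vt - v n‖) atTop (𝓝 0) →
        Tendsto (fun n => ⟪u n, v n⟫) atTop (𝓝 ⟪ut, vt⟫)) →
      Filter.liminf (fun n =>
          ((sSup {x : ℝ | ∃ v ∈ H, Hnorm E α₀ v = 1 ∧
              x = E v (u n) + κ n * Ea v (u n) + (α₀ + 1) * ⟪v, u n⟫} : ℝ) : EReal))
        atTop < ⊤ →
      Cmp m π hπ ut ∈ H) ∧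
    -- Condition (F2)
    (∀ (u : ℕ → Lp ℝ 2 m) (ut : Lp ℝ 2 (m.map π)),
      (∀ n, u n ∈ H) → Cmp m π hπ ut ∈ H →
      (∀ (v : ℕ → Lp ℝ 2 m) (vt : Lp ℝ 2 (m.map π)),
        Tendsto (fun n => ‖Cmp m π hπ vt - v n‖) atTop (𝓝 0) →
        Tendsto (fun n => ⟪u n, v n⟫) atTop (𝓝 ⟪ut, vt⟫)) →
      ∀ vt : Lp ℝ 2 (m.map π), Cmp m π hπ vt ∈ H →
        ∃ v : ℕ → Lp ℝ 2 m, (∀ n, v n ∈ H) ∧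
          Tendsto (fun n => ‖Cmp m π hπ vt - v n‖) atTop (𝓝 0) ∧
          Tendsto (fun n => E (v n) (u n) + κ n * Ea (v n) (u n)) atTop
            (𝓝 (E (Cmp m π hπ vt) (Cmp m π hπ ut)))) := by

  have hK0 : (0:ℝ) ≤ K := le_trans zero_le_one hcf.one_le_K
  have hpos : ∀ u ∈ H, ⟪u, u⟫ ≤ E u u + (α₀ + 1) * ⟪u, u⟫ := by
    intro u hu
    have h1 := hcf.nonneg u hu
    have h2 : (0:ℝ) ≤ ⟪u, u⟫ := real_inner_self_nonneg
    nlinarith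
  have hpos0 : ∀ u ∈ H, 0 ≤ E u u + (α₀ + 1) * ⟪u, u⟫ := by
    intro u hu
    exact le_trans real_inner_self_nonneg (hpos u hu)
  have hHsq : ∀ u ∈ H, (Hnorm E α₀ u) ^ 2 = E u u + (α₀ + 1) * ⟪u, u⟫ := by
    intro u hu
    exact Real.sq_sqrt (hpos0 u hu)
  have hHnn : ∀ u ∈ H, 0 ≤ Hnorm E α₀ u := fun u _ => Real.sqrt_nonneg _
  have hnormle : ∀ u ∈ H, ‖u‖ ≤ Hnorm E α₀ u := by
    intro u hu
    have h1 : ‖u‖ = Real.sqrt ⟪u, u⟫ := by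
      rw [real_inner_self_eq_norm_sq, Real.sqrt_sq (norm_nonneg u)]
    rw [h1]
    exact Real.sqrt_le_sqrt (hpos u hu)
  -- symmetric inner product on the wrapper type
  have hSdiag : ∀ x : HP H,
      (E x.val x.val + E x.val x.val) / 2 + (α₀ + 1) * ⟪x.val, x.val⟫
        = E x.val x.val + (α₀ + 1) * ⟪x.val, x.val⟫ := by
    intro x; ring
  letI core : InnerProductSpace.Core ℝ (HP H) :=
    { inner := fun x y => (E x.val y.val + E y.val x.val) / 2 + (α₀ + 1) * ⟪x.val, y.val⟫
      conj_inner_symm := by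
        intro x y
        simp only [RCLike.star_def, starRingEnd_apply, star_trivial]
        rw [real_inner_comm]; ring
      re_inner_nonneg := by
        intro x
        simp only [RCLike.re_to_real]
        rw [hSdiag x]
        exact hpos0 x.val x.mem
      add_left := by
        intro x y z
        simp only [HP.val_add]
        rw [hcf.add_left x.val y.val z.val x.mem y.mem z.mem,
          hcf.add_right z.val x.val y.val z.mem x.mem y.mem, inner_add_left]
        ring
      smul_left := by
        intro x y c
        simp only [HP.val_smul, RCLike.star_def, starRingEnd_apply, star_trivial]
        rw [hcf.smul_left c x.val y.val x.mem y.mem,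
          hcf.smul_right c y.val x.val y.mem x.mem, real_inner_smul_left]
        ring
      definite := by
        intro x hx
        have h1 := hpos x.val x.mem
        have h2 : (0:ℝ) ≤ ⟪x.val, x.val⟫ := real_inner_self_nonneg
        have hx' : (E x.val x.val + E x.val x.val) / 2 + (α₀ + 1) * ⟪x.val, x.val⟫
            = 0 := hx
        rw [hSdiag x] at hx'
        have h3 : ⟪x.val, x.val⟫ = 0 := le_antisymm (by rw [← hx']; exact h1) h2
        exact HP.ext' (inner_self_eq_zero.mp h3) }
  letI : NormedAddCommGroup (HP H) := core.toNormedAddCommGroup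
  letI : InnerProductSpace ℝ (HP H) := InnerProductSpace.ofCore core.toCore
  have hinner : ∀ x y : HP H,
      ⟪x, y⟫ = (E x.val y.val + E y.val x.val) / 2 + (α₀ + 1) * ⟪x.val, y.val⟫ :=
    fun x y => rfl
  have hnormW : ∀ x : HP H, ‖x‖ = Hnorm E α₀ x.val := by
    intro x
    have h1 : ‖x‖ ^ 2 = ⟪x, x⟫ := (real_inner_self_eq_norm_sq x).symm
    rw [hinner, hSdiag] at h1
    have h2 : ‖x‖ = Real.sqrt (‖x‖ ^ 2) := (Real.sqrt_sq (norm_nonneg _)).symm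
    rw [h2, h1]; rfl
  have hvalnorm : ∀ x : HP H, ‖x.val‖ ≤ ‖x‖ := by
    intro x; rw [hnormW]; exact hnormle x.val x.mem
  letI : CompleteSpace (HP H) := by
    apply Metric.complete_of_cauchySeq_tendsto
    intro u hu
    have hcs := Metric.cauchySeq_iff.mp hu
    have hcauchy : ∀ ε > (0:ℝ), ∃ N : ℕ, ∀ m ≥ N, ∀ n ≥ N,
        Hnorm E α₀ ((u m).val - (u n).val) < ε := by
      intro ε hε
      obtain ⟨Nn, hN⟩ := hcs ε hε
      refine ⟨Nn, fun m hm n hn => ?_⟩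
      have := hN m hm n hn
      rw [dist_eq_norm, hnormW] at this
      exact this
    obtain ⟨l, hl, hlim⟩ := hcf.hilbert (fun n => (u n).val) (fun n => (u n).mem) hcauchy
    refine ⟨⟨l, hl⟩, ?_⟩
    rw [tendsto_iff_dist_tendsto_zero]
    have hd : ∀ n, dist (u n) ⟨l, hl⟩ = Hnorm E α₀ ((u n).val - l) := by
      intro n
      rw [dist_eq_norm, hnormW]
      rfl
    simpa only [hd] using hlim
  -- the continuous bilinear form ℰ_{α₀+1}
  have haS_bound : ∀ x y : HP H,
      |E x.val y.val + (α₀ + 1) * ⟪x.val, y.val⟫| ≤ K * ‖x‖ * ‖y‖ := by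
    intro x y
    rw [hnormW, hnormW]
    exact hcf.sector x.val x.mem y.val y.mem
  let aLin : HP H →ₗ[ℝ] HP H →ₗ[ℝ] ℝ := LinearMap.mk₂ ℝ
    (fun x y => E x.val y.val + (α₀ + 1) * ⟪x.val, y.val⟫)
    (by
      intro x x' y
      simp only [HP.val_add]
      rw [hcf.add_left x.val x'.val y.val x.mem x'.mem y.mem, inner_add_left]; ring)
    (by
      intro c x y
      simp only [HP.val_smul, smul_eq_mul]
      rw [hcf.smul_left c x.val y.val x.mem y.mem, real_inner_smul_left]; ring)
    (by
      intro x y y'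
      simp only [HP.val_add]
      rw [hcf.add_right x.val y.val y'.val x.mem y.mem y'.mem, inner_add_right]; ring)
    (by
      intro c x y
      simp only [HP.val_smul, smul_eq_mul]
      rw [hcf.smul_right c x.val y.val x.mem y.mem, real_inner_smul_right]; ring)
  let aF : HP H →L[ℝ] HP H →L[ℝ] ℝ := aLin.mkContinuous₂ K
    (by
      intro x y
      rw [Real.norm_eq_abs]
      exact haS_bound x y)
  have haF : ∀ x y : HP H, aF x y = E x.val y.val + (α₀ + 1) * ⟪x.val, y.val⟫ :=
    fun x y => rfl
  have haF_diag : ∀ x : HP H, aF x x = ‖x‖ ^ 2 := by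
    intro x
    rw [haF, hnormW, hHsq x.val x.mem]

  -- the continuous antisymmetric form ℰᵃ
  have hEa_add_right : ∀ u v w : Lp ℝ 2 m, u ∈ H → v ∈ H → w ∈ H →
      Ea u (v + w) = Ea u v + Ea u w := by
    intro u v w hu hv hw
    rw [hEa_antisymm u hu (v + w) (H.add_mem hv hw), hEa_add_left v w u hv hw hu,
      hEa_antisymm u hu v hv, hEa_antisymm u hu w hw]
    ring
  have hEa_smul_right : ∀ (c : ℝ), ∀ u v : Lp ℝ 2 m, u ∈ H → v ∈ H →
      Ea u (c • v) = c * Ea u v := by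
    intro c u v hu hv
    rw [hEa_antisymm u hu (c • v) (H.smul_mem c hv), hEa_smul_left c v u hv hu,
      hEa_antisymm u hu v hv]
    ring
  let bLin : HP H →ₗ[ℝ] HP H →ₗ[ℝ] ℝ := LinearMap.mk₂ ℝ
    (fun x y => Ea x.val y.val)
    (by
      intro x x' y
      simp only [HP.val_add]
      exact hEa_add_left x.val x'.val y.val x.mem x'.mem y.mem)
    (by
      intro c x y
      simp only [HP.val_smul, smul_eq_mul]
      exact hEa_smul_left c x.val y.val x.mem y.mem)
    (by
      intro x y y'
      simp only [HP.val_add]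
      exact hEa_add_right x.val y.val y'.val x.mem y.mem y'.mem)
    (by
      intro c x y
      simp only [HP.val_smul, smul_eq_mul]
      exact hEa_smul_right c x.val y.val x.mem y.mem)
  let bF : HP H →L[ℝ] HP H →L[ℝ] ℝ := bLin.mkContinuous₂ K'
    (by
      intro x y
      rw [Real.norm_eq_abs]
      have := hEa_bound x.val x.mem y.val y.mem
      rw [hnormW, hnormW]
      exact this)
  have hbF : ∀ x y : HP H, bF x y = Ea x.val y.val := fun x y => rfl
  have hbF_anti : ∀ x y : HP H, bF x y = -bF y x := by
    intro x y
    rw [hbF, hbF]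
    exact hEa_antisymm x.val x.mem y.val y.mem
  have hbF_diag : ∀ x : HP H, bF x x = 0 := by
    intro x
    have := hbF_anti x x
    linarith
  -- the inclusion into L
  let jF : HP H →L[ℝ] Lp ℝ 2 m := LinearMap.mkContinuous
    { toFun := HP.val, map_add' := HP.val_add, map_smul' := fun c x => HP.val_smul c x } 1
    (fun x => by rw [one_mul]; exact hvalnorm x)
  have hjF : ∀ x : HP H, jF x = x.val := fun x => rfl
  have hjinj : Function.Injective jF := by
    intro a b h
    rw [hjF, hjF] at h
    exact HP.val_injective h
  -- the kernel of ℰᵃ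
  let KK : Submodule ℝ (HP H) :=
    { carrier := {x : HP H | ∀ y : HP H, bF x y = 0}
      add_mem' := by
        intro a b ha hb y
        rw [map_add, ContinuousLinearMap.add_apply, ha y, hb y, add_zero]
      zero_mem' := by
        intro y
        rw [map_zero, ContinuousLinearMap.zero_apply]
      smul_mem' := by
        intro c a ha y
        rw [_root_.map_smul, ContinuousLinearMap.smul_apply, ha y, smul_zero] }
  have hKmem : ∀ x : HP H, x ∈ KK ↔ ∀ y : HP H, bF x y = 0 := fun x => Iff.rfl
  -- a scalar helper
  have hscal : ∀ a b : ℝ, 0 ≤ a → 0 ≤ b → a ^ 2 ≤ b * a → a ≤ b := by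
    intro a b ha hb h
    rcases eq_or_lt_of_le ha with h0 | h0
    · rw [← h0]; exact hb
    · have h' : a * a ≤ b * a := by nlinarith
      exact le_of_mul_le_mul_right h' h0
  -- solutions of the resolvent-type problems for ℰ + c ℰᵃ
  have hVex : ∀ (c : ℝ) (g : Lp ℝ 2 m), ∃ v : HP H, ∀ φ : HP H,
      aF v φ + c * bF v φ = ⟪g, jF φ⟫ := by
    intro c g
    have hBapp : ∀ x y : HP H, (aF + c • bF) x y = aF x y + c * bF x y := by
      intro x y
      simp [ContinuousLinearMap.add_apply, ContinuousLinearMap.smul_apply, smul_eq_mul]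
    have hco : ∀ x : HP H, ‖x‖ ^ 2 ≤ (aF + c • bF) x x := by
      intro x
      rw [hBapp, haF_diag, hbF_diag, mul_zero, add_zero]
    obtain ⟨v, hv⟩ := exists_laxMilgram (aF + c • bF) hco ((innerSL ℝ g).comp jF)
    refine ⟨v, fun φ => ?_⟩
    rw [← hBapp]
    simpa using hv φ
  choose V hV using hVex
  have hVbound : ∀ (c : ℝ) (g : Lp ℝ 2 m), ‖V c g‖ ≤ ‖g‖ := by
    intro c g
    have h1 := hV c g (V c g)
    rw [hbF_diag, mul_zero, add_zero, haF_diag] at h1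
    have h2 : ⟪g, jF (V c g)⟫ ≤ ‖g‖ * ‖V c g‖ := by
      calc ⟪g, jF (V c g)⟫ ≤ ‖g‖ * ‖jF (V c g)‖ := real_inner_le_norm _ _
        _ ≤ ‖g‖ * ‖V c g‖ := by
            have := hvalnorm (V c g)
            rw [← hjF] at this
            exact mul_le_mul_of_nonneg_left this (norm_nonneg g)
    exact hscal _ _ (norm_nonneg _) (norm_nonneg _) (by rw [h1]; exact h2)
  -- the main strong convergence lemma
  have hS1 : ∀ (g : Lp ℝ 2 m) (xs : HP H), xs ∈ KK →
      (∀ φ : HP H, φ ∈ KK → aF xs φ = ⟪g, jF φ⟫) →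
      Tendsto (fun n : ℕ => ‖V (κ n) g - xs‖) atTop (𝓝 0) := by
    intro g xs hxsK hxseq
    have hbFV : ∀ (c : ℝ) (φ : HP H), φ ∈ KK → bF (V c g) φ = 0 := by
      intro c φ hφ
      rw [hbF_anti, hφ (V c g), neg_zero]
    have haFV : ∀ (c : ℝ) (φ : HP H), φ ∈ KK → aF (V c g) φ = ⟪g, jF φ⟫ := by
      intro c φ hφ
      have := hV c g φ
      rwa [hbFV c φ hφ, mul_zero, add_zero] at this
    have hsq : Tendsto (fun n : ℕ => ‖V (κ n) g - xs‖ ^ 2) atTop (𝓝 0) := by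
      rw [Filter.tendsto_iff_ultrafilter]
      intro U hU
      obtain ⟨z, hz⟩ := weak_ulim U (fun n => V (κ n) g) ‖g‖
        (Eventually.of_forall (fun n => hVbound _ _))
      -- the weak limit lies in KK
      have hzK : z ∈ KK := by
        intro y
        have h1 : Tendsto (fun n => bF (V (κ n) g) y) atTop (𝓝 0) := by
          have hbnd : ∀ᶠ n in atTop, ‖bF (V (κ n) g) y‖ ≤
              (‖g‖ * ‖y‖ + K * ‖g‖ * ‖y‖) * (κ n)⁻¹ := by
            filter_upwards [hκ.eventually_ge_atTop 1] with n hn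
            have hκpos : (0:ℝ) < κ n := lt_of_lt_of_le one_pos hn
            have heq : bF (V (κ n) g) y =
                (⟪g, jF y⟫ - aF (V (κ n) g) y) * (κ n)⁻¹ := by
              rw [eq_mul_inv_iff_mul_eq₀ (ne_of_gt hκpos), mul_comm]
              have h2 := hV (κ n) g y
              linarith
            rw [heq, norm_mul, Real.norm_eq_abs, Real.norm_eq_abs,
              abs_of_pos (inv_pos.mpr hκpos)]
            refine mul_le_mul_of_nonneg_right ?_ (le_of_lt (inv_pos.mpr hκpos))
            have e1 : |⟪g, jF y⟫| ≤ ‖g‖ * ‖y‖ := by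
              calc |⟪g, jF y⟫| ≤ ‖g‖ * ‖jF y‖ := abs_real_inner_le_norm _ _
                _ ≤ ‖g‖ * ‖y‖ := mul_le_mul_of_nonneg_left
                    (by rw [hjF]; exact hvalnorm y) (norm_nonneg g)
            have e2 : |aF (V (κ n) g) y| ≤ K * ‖g‖ * ‖y‖ := by
              calc |aF (V (κ n) g) y| ≤ K * ‖V (κ n) g‖ * ‖y‖ := by
                    rw [haF]; exact haS_bound (V (κ n) g) y
                _ ≤ K * ‖g‖ * ‖y‖ := by
                    have h4 := hVbound (κ n) g
                    have h5 : 0 ≤ K * ‖y‖ := mul_nonneg hK0 (norm_nonneg y)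
                    nlinarith [h4, h5]
            calc |⟪g, jF y⟫ - aF (V (κ n) g) y|
                ≤ |⟪g, jF y⟫| + |aF (V (κ n) g) y| := abs_sub _ _
              _ ≤ ‖g‖ * ‖y‖ + K * ‖g‖ * ‖y‖ := by linarith
          have htd : Tendsto (fun n => (‖g‖ * ‖y‖ + K * ‖g‖ * ‖y‖) * (κ n)⁻¹)
              atTop (𝓝 0) := by
            have h3 : Tendsto (fun n => (κ n)⁻¹) atTop (𝓝 0) := hκ.inv_tendsto_atTop
            simpa using h3.const_mul (‖g‖ * ‖y‖ + K * ‖g‖ * ‖y‖)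
          exact squeeze_zero_norm' hbnd htd
        have h2 : Tendsto (fun n => bF (V (κ n) g) y) (U : Filter ℕ) (𝓝 (bF z y)) := by
          have := hz (bF.flip y)
          simpa [ContinuousLinearMap.flip_apply] using this
        exact tendsto_nhds_unique h2 (h1.mono_left hU)
      -- the weak limit satisfies the limiting equation on KK
      have hzeq : ∀ φ : HP H, φ ∈ KK → aF z φ = ⟪g, jF φ⟫ := by
        intro φ hφ
        have h1 : Tendsto (fun n => aF (V (κ n) g) φ) (U : Filter ℕ) (𝓝 ⟪g, jF φ⟫) := by
          have : (fun n => aF (V (κ n) g) φ) = fun _ => ⟪g, jF φ⟫ := by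
            funext n; exact haFV (κ n) φ hφ
          rw [this]
          exact tendsto_const_nhds
        have h2 : Tendsto (fun n => aF (V (κ n) g) φ) (U : Filter ℕ) (𝓝 (aF z φ)) := by
          have := hz (aF.flip φ)
          simpa [ContinuousLinearMap.flip_apply] using this
        exact tendsto_nhds_unique h2 h1
      -- hence it equals xs
      have hzxs : z = xs := by
        have hmem : z - xs ∈ KK := KK.sub_mem hzK hxsK
        have h1 : aF (z - xs) (z - xs) = 0 := by
          have e1 : aF z (z - xs) = ⟪g, jF (z - xs)⟫ := hzeq _ hmem
          have e2 : aF xs (z - xs) = ⟪g, jF (z - xs)⟫ := hxseq _ hmem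
          rw [show aF (z - xs) = aF z - aF xs from map_sub aF z xs,
            ContinuousLinearMap.sub_apply, e1, e2, sub_self]
        rw [haF_diag] at h1
        have h2 : ‖z - xs‖ = 0 := by
          have := sq_eq_zero_iff.mp h1
          exact this
        exact sub_eq_zero.mp (norm_eq_zero.mp h2)
      -- the norm-squared identity
      have hid : ∀ n : ℕ, ‖V (κ n) g - xs‖ ^ 2 =
          ⟪g, jF (V (κ n) g)⟫ - ⟪g, jF xs⟫ - aF xs (V (κ n) g) + aF xs xs := by
        intro n
        have hb0 : bF (V (κ n) g - xs) (V (κ n) g - xs) = 0 := hbF_diag _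
        have e0 : ‖V (κ n) g - xs‖ ^ 2 = aF (V (κ n) g - xs) (V (κ n) g - xs) :=
          (haF_diag _).symm
        have eV : aF (V (κ n) g) (V (κ n) g) = ⟪g, jF (V (κ n) g)⟫ := by
          have := hV (κ n) g (V (κ n) g)
          rwa [hbF_diag, mul_zero, add_zero] at this
        have eVx : aF (V (κ n) g) xs = ⟪g, jF xs⟫ := haFV (κ n) xs hxsK
        have ha : aF (V (κ n) g - xs) (V (κ n) g - xs) =
            aF (V (κ n) g) (V (κ n) g) - aF (V (κ n) g) xs
              - ((aF xs) (V (κ n) g) - (aF xs) xs) := by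
          rw [show aF (V (κ n) g - xs) = aF (V (κ n) g) - aF xs from map_sub aF _ _,
            ContinuousLinearMap.sub_apply, map_sub, map_sub]
        rw [e0, ha, eV, eVx]
        ring
      -- pass to the limit along the ultrafilter
      have hlim1 : Tendsto (fun n => ⟪g, jF (V (κ n) g)⟫) (U : Filter ℕ)
          (𝓝 ⟪g, jF xs⟫) := by
        have := hz ((innerSL ℝ g).comp jF)
        rw [hzxs] at this
        simpa using this
      have hlim3 : Tendsto (fun n => aF xs (V (κ n) g)) (U : Filter ℕ)
          (𝓝 (aF xs xs)) := by
        have := hz (aF xs)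
        rwa [hzxs] at this
      have htot : Tendsto
          (fun n => ⟪g, jF (V (κ n) g)⟫ - ⟪g, jF xs⟫ - aF xs (V (κ n) g) + aF xs xs)
          (U : Filter ℕ)
          (𝓝 (⟪g, jF xs⟫ - ⟪g, jF xs⟫ - aF xs xs + aF xs xs)) :=
        ((hlim1.sub tendsto_const_nhds).sub hlim3).add tendsto_const_nhds
      have hval : (⟪g, jF xs⟫ - ⟪g, jF xs⟫ - aF xs xs + aF xs xs : ℝ) = 0 := by ring
      rw [hval] at htot
      have hfun : (fun n : ℕ => ‖V (κ n) g - xs‖ ^ 2) =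
          fun n => ⟪g, jF (V (κ n) g)⟫ - ⟪g, jF xs⟫ - aF xs (V (κ n) g) + aF xs xs := by
        funext n; exact hid n
      rw [hfun]
      exact htot
    -- take square roots
    have hfn : (fun n : ℕ => ‖V (κ n) g - xs‖) =
        fun n => Real.sqrt (‖V (κ n) g - xs‖ ^ 2) := by
      funext n; rw [Real.sqrt_sq (norm_nonneg _)]
    rw [hfn]
    have := (Real.continuous_sqrt.tendsto 0).comp hsq
    simpa [Function.comp_def] using this
  -- additional facts about ℰᵃ
  have hEa_diag : ∀ u ∈ H, Ea u u = 0 := by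
    intro u hu
    have := hEa_antisymm u hu u hu
    linarith
  have hEa_zero_left : ∀ u ∈ H, Ea 0 u = 0 := by
    intro u hu
    have h1 : ((0:ℝ) • (0 : Lp ℝ 2 m)) = 0 := by simp
    have := hEa_smul_left 0 0 u H.zero_mem hu
    rw [h1] at this
    linarith
  -- elements of KK are pullbacks
  have hKpull : ∀ x : HP H, x ∈ KK →
      ∃ xt : Lp ℝ 2 (m.map π), Cmp m π hπ xt ∈ H ∧ x.val = Cmp m π hπ xt := by
    intro x hx
    apply (hasym2 x.val x.mem).mp
    intro v hv
    exact hx ⟨v, hv⟩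
  -- pullbacks are in KK
  have hpullK : ∀ (wt : Lp ℝ 2 (m.map π)) (hw : Cmp m π hπ wt ∈ H),
      (⟨Cmp m π hπ wt, hw⟩ : HP H) ∈ KK := by
    intro wt hw y
    exact (hasym2 (Cmp m π hπ wt) hw).mpr ⟨wt, hw, rfl⟩ y.val y.mem
  -- projection onto the range of Cmp, as far as KK is concerned
  have hPex : ∀ g : Lp ℝ 2 m, ∃ gt : Lp ℝ 2 (m.map π),
      ∀ x : HP H, x ∈ KK → ⟪Cmp m π hπ gt, x.val⟫ = ⟪g, x.val⟫ := by
    intro g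
    let ΦL : Lp ℝ 2 (m.map π) →L[ℝ] Lp ℝ 2 m := LinearMap.mkContinuous
      { toFun := Cmp m π hπ, map_add' := cmp_add m π hπ,
        map_smul' := fun c x => by simpa using cmp_smul m π hπ c x } 1
      (fun a => by rw [one_mul]; exact le_of_eq (cmp_norm m π hπ a))
    have hΦL : ∀ a, ΦL a = Cmp m π hπ a := fun a => rfl
    refine ⟨(InnerProductSpace.toDual ℝ (Lp ℝ 2 (m.map π))).symm ((innerSL ℝ g).comp ΦL), ?_⟩
    intro x hx
    obtain ⟨xt, hxt1, hxt2⟩ := hKpull x hx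
    rw [hxt2, cmp_inner m π hπ _ xt]
    have h1 := InnerProductSpace.toDual_symm_apply
      (𝕜 := ℝ) (E := Lp ℝ 2 (m.map π)) (x := xt) (y := (innerSL ℝ g).comp ΦL)
    rw [h1]
    simp [hΦL]
  choose P hP using hPex
  -- Yosida-type approximations in KK
  have hKcl : IsClosed ((KK : Set (HP H))) := by
    have hrw : ((KK : Set (HP H))) = ⋂ y : HP H, {x : HP H | bF x y = 0} := by
      ext x
      simp only [Set.mem_iInter, Set.mem_setOf_eq]
      exact hKmem x
    rw [hrw]
    refine isClosed_iInter (fun y => isClosed_eq ?_ continuous_const)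
    have h := (bF.flip y).continuous
    have heq : (fun x : HP H => bF x y) = ⇑(bF.flip y) := by
      funext x; rw [ContinuousLinearMap.flip_apply]
    rw [heq]
    exact h
  letI : CompleteSpace ↥KK := hKcl.completeSpace_coe
  have hYex : ∀ (t : ℝ), 0 ≤ t → ∀ w : HP H, w ∈ KK → ∃ y : HP H, y ∈ KK ∧
      ∀ φ : HP H, φ ∈ KK → aF y φ + t * ⟪jF y, jF φ⟫ = t * ⟪jF w, jF φ⟫ := by
    intro t ht w hw
    let BLin : ↥KK →ₗ[ℝ] ↥KK →ₗ[ℝ] ℝ := LinearMap.mk₂ ℝ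
      (fun x y => aF ↑x ↑y + t * ⟪jF ↑x, jF ↑y⟫)
      (by
        intro x x' y
        simp only [Submodule.coe_add, map_add, ContinuousLinearMap.add_apply,
          inner_add_left]
        ring)
      (by
        intro c x y
        simp only [Submodule.coe_smul, _root_.map_smul, ContinuousLinearMap.smul_apply,
          real_inner_smul_left, smul_eq_mul]
        ring)
      (by
        intro x y y'
        simp only [Submodule.coe_add, map_add, inner_add_right]
        ring)
      (by
        intro c x y
        simp only [Submodule.coe_smul, _root_.map_smul, real_inner_smul_right, smul_eq_mul]
        ring)
    have hncoe : ∀ x : ↥KK, ‖(x : HP H)‖ = ‖x‖ := fun x => rfl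
    let BF : ↥KK →L[ℝ] ↥KK →L[ℝ] ℝ := BLin.mkContinuous₂ (K + t)
      (by
        intro x y
        rw [Real.norm_eq_abs]
        have h1 : |aF ↑x ↑y| ≤ K * ‖x‖ * ‖y‖ := by
          rw [← hncoe x, ← hncoe y]
          rw [haF]
          exact haS_bound _ _
        have h2 : |t * ⟪jF ↑x, jF ↑y⟫| ≤ t * ‖x‖ * ‖y‖ := by
          rw [abs_mul, abs_of_nonneg ht]
          have h3 : |⟪jF (↑x : HP H), jF (↑y : HP H)⟫| ≤ ‖x‖ * ‖y‖ := by
            calc |⟪jF (↑x : HP H), jF (↑y : HP H)⟫|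
                ≤ ‖jF (↑x : HP H)‖ * ‖jF (↑y : HP H)‖ := abs_real_inner_le_norm _ _
              _ ≤ ‖x‖ * ‖y‖ := by
                  rw [← hncoe x, ← hncoe y]
                  have hx1 : ‖jF (↑x : HP H)‖ ≤ ‖(↑x : HP H)‖ := by
                    rw [hjF]; exact hvalnorm _
                  have hy1 : ‖jF (↑y : HP H)‖ ≤ ‖(↑y : HP H)‖ := by
                    rw [hjF]; exact hvalnorm _
                  exact mul_le_mul hx1 hy1 (norm_nonneg _) (norm_nonneg _)
          calc t * |⟪jF (↑x : HP H), jF (↑y : HP H)⟫| ≤ t * (‖x‖ * ‖y‖) :=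
                mul_le_mul_of_nonneg_left h3 ht
            _ = t * ‖x‖ * ‖y‖ := by ring
        have h4 : |BLin x y| ≤ |aF ↑x ↑y| + |t * ⟪jF ↑x, jF ↑y⟫| := abs_add_le _ _
        calc |BLin x y| ≤ K * ‖x‖ * ‖y‖ + t * ‖x‖ * ‖y‖ := by
              refine le_trans h4 (by linarith)
          _ = (K + t) * ‖x‖ * ‖y‖ := by ring)
    have hBF : ∀ x y : ↥KK, BF x y = aF ↑x ↑y + t * ⟪jF ↑x, jF ↑y⟫ := fun x y => rfl
    have hcoer : ∀ x : ↥KK, ‖x‖ ^ 2 ≤ BF x x := by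
      intro x
      rw [hBF, ← hncoe x, haF_diag]
      have : 0 ≤ t * ⟪jF (↑x : HP H), jF (↑x : HP H)⟫ :=
        mul_nonneg ht real_inner_self_nonneg
      linarith
    let fK : ↥KK →L[ℝ] ℝ := LinearMap.mkContinuous
      { toFun := fun x : ↥KK => t * ⟪jF w, jF ↑x⟫
        map_add' := by
          intro x x'
          simp only [Submodule.coe_add, map_add, inner_add_right]
          ring
        map_smul' := by
          intro c x
          simp only [Submodule.coe_smul, _root_.map_smul, real_inner_smul_right, smul_eq_mul,
            RingHom.id_apply]
          ring } (t * ‖w‖)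
      (by
        intro x
        rw [Real.norm_eq_abs]
        have h1 : |⟪jF w, jF (↑x : HP H)⟫| ≤ ‖w‖ * ‖x‖ := by
          calc |⟪jF w, jF (↑x : HP H)⟫| ≤ ‖jF w‖ * ‖jF (↑x : HP H)‖ :=
                abs_real_inner_le_norm _ _
            _ ≤ ‖w‖ * ‖x‖ := by
                rw [← hncoe x]
                have hw1 : ‖jF w‖ ≤ ‖w‖ := by rw [hjF]; exact hvalnorm _
                have hx1 : ‖jF (↑x : HP H)‖ ≤ ‖(↑x : HP H)‖ := by
                  rw [hjF]; exact hvalnorm _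
                exact mul_le_mul hw1 hx1 (norm_nonneg _) (norm_nonneg _)
        calc |t * ⟪jF w, jF (↑x : HP H)⟫| = t * |⟪jF w, jF (↑x : HP H)⟫| := by
              rw [abs_mul, abs_of_nonneg ht]
          _ ≤ t * (‖w‖ * ‖x‖) := mul_le_mul_of_nonneg_left h1 ht
          _ = t * ‖w‖ * ‖x‖ := by ring)
    obtain ⟨y', hy'⟩ := exists_laxMilgram BF hcoer fK
    refine ⟨↑y', (y' : ↥KK).2, ?_⟩
    intro φ hφ
    have := hy' ⟨φ, hφ⟩
    rw [hBF] at this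
    exact this
  -- Hnorm scaling
  have hHsmul : ∀ (t : ℝ) (v : Lp ℝ 2 m), v ∈ H →
      Hnorm E α₀ (t • v) = |t| * Hnorm E α₀ v := by
    intro t v hv
    have h1 : E (t • v) (t • v) + (α₀ + 1) * ⟪t • v, t • v⟫
        = t ^ 2 * (E v v + (α₀ + 1) * ⟪v, v⟫) := by
      rw [hcf.smul_left t v (t • v) hv (H.smul_mem t hv),
        hcf.smul_right t v v hv hv, real_inner_smul_left, real_inner_smul_right]
      ring
    have h2 : Hnorm E α₀ (t • v) = Real.sqrt (t ^ 2 * (E v v + (α₀ + 1) * ⟪v, v⟫)) := by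
      rw [← h1]; rfl
    rw [h2, Real.sqrt_mul (sq_nonneg t), Real.sqrt_sq_eq_abs]
    rfl
  refine ⟨?_, ?_⟩
  · -- ===================== (F1) =====================
    intro u ut hu hweak hlim
    set Θ : ℕ → ℝ := fun n => sSup {x : ℝ | ∃ v ∈ H, Hnorm E α₀ v = 1 ∧
        x = E v (u n) + κ n * Ea v (u n) + (α₀ + 1) * ⟪v, u n⟫} with hΘdef
    -- a frequent real bound
    obtain ⟨c, hc⟩ : ∃ c : ℝ, ∃ᶠ n in atTop, Θ n < c := by
      obtain ⟨c, hc1, _⟩ := EReal.exists_between_coe_real hlim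
      refine ⟨c, ?_⟩
      have hfreq := Filter.frequently_lt_of_liminf_lt (by isBoundedDefault) hc1
      exact hfreq.mono (fun n hn => by exact_mod_cast hn)
    have hbdd : ∀ n, BddAbove {x : ℝ | ∃ v ∈ H, Hnorm E α₀ v = 1 ∧
        x = E v (u n) + κ n * Ea v (u n) + (α₀ + 1) * ⟪v, u n⟫} := by
      intro n
      refine ⟨K * Hnorm E α₀ (u n) + |κ n| * (K' * Hnorm E α₀ (u n)), ?_⟩
      rintro x ⟨v, hv, hv1, rfl⟩
      have h1 : |E v (u n) + (α₀ + 1) * ⟪v, u n⟫| ≤ K * Hnorm E α₀ (u n) := by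
        have := hcf.sector v hv (u n) (hu n)
        rwa [hv1, mul_one] at this
      have h2 : |Ea v (u n)| ≤ K' * Hnorm E α₀ (u n) := by
        have := hEa_bound v hv (u n) (hu n)
        rwa [hv1, mul_one] at this
      have h3 : κ n * Ea v (u n) ≤ |κ n| * (K' * Hnorm E α₀ (u n)) := by
        calc κ n * Ea v (u n) ≤ |κ n * Ea v (u n)| := le_abs_self _
          _ = |κ n| * |Ea v (u n)| := abs_mul _ _
          _ ≤ |κ n| * (K' * Hnorm E α₀ (u n)) :=
              mul_le_mul_of_nonneg_left h2 (abs_nonneg _)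
      have h4 : E v (u n) + (α₀ + 1) * ⟪v, u n⟫ ≤ K * Hnorm E α₀ (u n) :=
        le_trans (le_abs_self _) h1
      linarith
    have hmemΘ : ∀ n, ∀ v ∈ H, Hnorm E α₀ v = 1 →
        E v (u n) + κ n * Ea v (u n) + (α₀ + 1) * ⟪v, u n⟫ ≤ Θ n := by
      intro n v hv hv1
      exact le_csSup (hbdd n) ⟨v, hv, hv1, rfl⟩
    -- bound on the H-norm on the good set
    have hΘlb : ∀ n, Θ n < c → Hnorm E α₀ (u n) ≤ max c 0 := by
      intro n hn
      by_cases h0 : Hnorm E α₀ (u n) = 0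
      · rw [h0]; exact le_max_right _ _
      · have hpos' : 0 < Hnorm E α₀ (u n) :=
          lt_of_le_of_ne (hHnn (u n) (hu n)) (Ne.symm h0)
        have hvm : ((Hnorm E α₀ (u n))⁻¹ • u n) ∈ H := H.smul_mem _ (hu n)
        have hv1 : Hnorm E α₀ ((Hnorm E α₀ (u n))⁻¹ • u n) = 1 := by
          rw [hHsmul _ (u n) (hu n), abs_of_pos (inv_pos.mpr hpos'),
            inv_mul_cancel₀ (ne_of_gt hpos')]
        have hEa0 : Ea ((Hnorm E α₀ (u n))⁻¹ • u n) (u n) = 0 := by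
          rw [hEa_smul_left _ (u n) (u n) (hu n) (hu n), hEa_diag (u n) (hu n), mul_zero]
        have hval : E ((Hnorm E α₀ (u n))⁻¹ • u n) (u n)
            + κ n * Ea ((Hnorm E α₀ (u n))⁻¹ • u n) (u n)
            + (α₀ + 1) * ⟪(Hnorm E α₀ (u n))⁻¹ • u n, u n⟫ = Hnorm E α₀ (u n) := by
          rw [hEa0, mul_zero, hcf.smul_left _ _ _ (hu n) (hu n), real_inner_smul_left]
          have hX : E (u n) (u n) + (α₀ + 1) * ⟪u n, u n⟫ = Hnorm E α₀ (u n) ^ 2 :=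
            (hHsq (u n) (hu n)).symm
          have h5 : (Hnorm E α₀ (u n))⁻¹ * (E (u n) (u n) + (α₀ + 1) * ⟪u n, u n⟫)
              = Hnorm E α₀ (u n) := by
            rw [hX, sq, ← mul_assoc, inv_mul_cancel₀ (ne_of_gt hpos'), one_mul]
          linear_combination h5
        have := hmemΘ n _ hvm hv1
        rw [hval] at this
        exact le_max_of_le_left (le_trans this (le_of_lt hn))
    -- bound on the antisymmetric part on the good set
    have hκEa : ∀ n, Θ n < c → ∀ v ∈ H,
        |κ n * Ea v (u n)| ≤ (|c| + K * max c 0) * Hnorm E α₀ v := by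
      intro n hn v hv
      have hunit : ∀ w ∈ H, Hnorm E α₀ w = 1 →
          |κ n * Ea w (u n)| ≤ |c| + K * max c 0 := by
        intro w hw hw1
        have p1 := le_trans (hmemΘ n w hw hw1) (le_of_lt hn)
        have hnegw : ((-1 : ℝ) • w) ∈ H := H.smul_mem _ hw
        have hw1' : Hnorm E α₀ ((-1 : ℝ) • w) = 1 := by
          rw [hHsmul (-1) w hw, abs_neg, abs_one, one_mul, hw1]
        have p2 := le_trans (hmemΘ n ((-1 : ℝ) • w) hnegw hw1') (le_of_lt hn)
        rw [hcf.smul_left (-1) w (u n) hw (hu n),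
          hEa_smul_left (-1) w (u n) hw (hu n), real_inner_smul_left] at p2
        have habs : |E w (u n) + κ n * Ea w (u n) + (α₀ + 1) * ⟪w, u n⟫| ≤ |c| := by
          rw [abs_le]
          constructor
          · nlinarith [neg_abs_le c, le_abs_self c]
          · nlinarith [le_abs_self c]
        have hsec := hcf.sector w hw (u n) (hu n)
        rw [hw1, mul_one] at hsec
        have hKH : K * Hnorm E α₀ (u n) ≤ K * max c 0 :=
          mul_le_mul_of_nonneg_left (hΘlb n hn) hK0
        have hrest : |E w (u n) + (α₀ + 1) * ⟪w, u n⟫| ≤ K * max c 0 :=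
          le_trans hsec hKH
        have hdecomp : κ n * Ea w (u n) =
            (E w (u n) + κ n * Ea w (u n) + (α₀ + 1) * ⟪w, u n⟫)
            - (E w (u n) + (α₀ + 1) * ⟪w, u n⟫) := by ring
        rw [hdecomp]
        exact le_trans (abs_sub _ _) (by linarith)
      by_cases h0 : Hnorm E α₀ v = 0
      · have hv0 : ‖v‖ = 0 := le_antisymm (h0 ▸ hnormle v hv) (norm_nonneg v)
        have hveq : v = 0 := norm_eq_zero.mp hv0
        have h8 : Ea v (u n) = 0 := by rw [hveq]; exact hEa_zero_left (u n) (hu n)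
        rw [h8, mul_zero, abs_zero]
        have hC : 0 ≤ |c| + K * max c 0 :=
          add_nonneg (abs_nonneg c) (mul_nonneg hK0 (le_max_right c 0))
        exact mul_nonneg hC (hHnn v hv)
      · have hpos' : 0 < Hnorm E α₀ v := lt_of_le_of_ne (hHnn v hv) (Ne.symm h0)
        have hwm : ((Hnorm E α₀ v)⁻¹ • v) ∈ H := H.smul_mem _ hv
        have hw1 : Hnorm E α₀ ((Hnorm E α₀ v)⁻¹ • v) = 1 := by
          rw [hHsmul _ v hv, abs_of_pos (inv_pos.mpr hpos'),
            inv_mul_cancel₀ (ne_of_gt hpos')]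
        have h6 := hunit _ hwm hw1
        rw [hEa_smul_left _ v (u n) hv (hu n)] at h6
        have h7 : |κ n * Ea v (u n)| = |κ n * ((Hnorm E α₀ v)⁻¹ * Ea v (u n))|
            * Hnorm E α₀ v := by
          rw [abs_mul (κ n), abs_mul (κ n), abs_mul, abs_of_pos (inv_pos.mpr hpos')]
          field_simp
        rw [h7]
        calc |κ n * ((Hnorm E α₀ v)⁻¹ * Ea v (u n))| * Hnorm E α₀ v
            ≤ (|c| + K * max c 0) * Hnorm E α₀ v :=
              mul_le_mul_of_nonneg_right h6 (le_of_lt hpos')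
          _ = (|c| + K * max c 0) * Hnorm E α₀ v := rfl
    -- an ultrafilter concentrating on the good set
    haveI hNB : (atTop ⊓ 𝓟 {n | Θ n < c}).NeBot := Filter.frequently_iff_neBot.mp hc
    set U : Ultrafilter ℕ := Ultrafilter.of (atTop ⊓ 𝓟 {n | Θ n < c}) with hUdef
    have hUle : (U : Filter ℕ) ≤ atTop := le_trans (Ultrafilter.of_le _) inf_le_left
    have hUA : ∀ᶠ n in (U : Filter ℕ), Θ n < c := by
      have h1 : (U : Filter ℕ) ≤ 𝓟 {n | Θ n < c} :=
        le_trans (Ultrafilter.of_le _) inf_le_right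
      exact h1 (Filter.mem_principal_self _)
    -- weak ultrafilter limit in the H-Hilbert space
    obtain ⟨z, hz⟩ := weak_ulim U (fun n => (⟨u n, hu n⟩ : HP H)) (max c 0)
      (by
        filter_upwards [hUA] with n hn
        rw [hnormW]
        exact hΘlb n hn)
    -- the weak limit kills ℰᵃ
    have hEaz : ∀ v ∈ H, Ea v z.val = 0 := by
      intro v hv
      have h1 : Tendsto (fun n => Ea v (u n)) (U : Filter ℕ) (𝓝 0) := by
        have hbnd : ∀ᶠ n in (U : Filter ℕ), ‖Ea v (u n)‖ ≤
            ((|c| + K * max c 0) * Hnorm E α₀ v) * (κ n)⁻¹ := by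
          filter_upwards [hUA, hUle (hκ.eventually_ge_atTop 1)] with n hn hκn
          have hκpos : (0:ℝ) < κ n := lt_of_lt_of_le one_pos hκn
          have h2 := hκEa n hn v hv
          rw [abs_mul, abs_of_pos hκpos] at h2
          rw [Real.norm_eq_abs]
          calc |Ea v (u n)| = (κ n * |Ea v (u n)|) * (κ n)⁻¹ := by
                field_simp
            _ ≤ ((|c| + K * max c 0) * Hnorm E α₀ v) * (κ n)⁻¹ :=
              mul_le_mul_of_nonneg_right h2 (le_of_lt (inv_pos.mpr hκpos))
        have htd : Tendsto (fun n => ((|c| + K * max c 0) * Hnorm E α₀ v) * (κ n)⁻¹)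
            (U : Filter ℕ) (𝓝 0) := by
          have h3 : Tendsto (fun n => (κ n)⁻¹) atTop (𝓝 0) := hκ.inv_tendsto_atTop
          have h4 := h3.const_mul ((|c| + K * max c 0) * Hnorm E α₀ v)
          rw [mul_zero] at h4
          exact h4.mono_left hUle
        exact squeeze_zero_norm' hbnd htd
      have h2 : Tendsto (fun n => Ea v (u n)) (U : Filter ℕ) (𝓝 (Ea v z.val)) := by
        have h3 := hz (bF ⟨v, hv⟩)
        exact h3
      exact tendsto_nhds_unique h2 h1
    -- hence the weak limit is a pullback
    obtain ⟨zt, hzt1, hzt2⟩ := (hasym2 z.val z.mem).mp (fun v hv => by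
      rw [hEa_antisymm z.val z.mem v hv, hEaz v hv, neg_zero])
    -- identify the weak limit with ut against pullbacks
    have hcompat : ∀ gt : Lp ℝ 2 (m.map π),
        ⟪z.val, Cmp m π hπ gt⟫ = ⟪Cmp m π hπ ut, Cmp m π hπ gt⟫ := by
      intro gt
      have h1 : Tendsto (fun n => ⟪u n, Cmp m π hπ gt⟫) atTop (𝓝 ⟪ut, gt⟫) := by
        apply hweak (fun _ => Cmp m π hπ gt) gt
        have : (fun n : ℕ => ‖Cmp m π hπ gt - Cmp m π hπ gt‖) = fun _ => 0 := by
          funext n; simp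
        rw [this]
        exact tendsto_const_nhds
      have h2 : Tendsto (fun n => ⟪u n, Cmp m π hπ gt⟫) (U : Filter ℕ)
          (𝓝 ⟪z.val, Cmp m π hπ gt⟫) := by
        have h3 := hz ((innerSL ℝ (Cmp m π hπ gt)).comp jF)
        have h4 : (fun n => ((innerSL ℝ (Cmp m π hπ gt)).comp jF)
            ((⟨u n, hu n⟩ : HP H))) = fun n => ⟪u n, Cmp m π hπ gt⟫ := by
          funext n
          simp only [ContinuousLinearMap.comp_apply, innerSL_apply_apply]
          exact real_inner_comm _ _
        have h5 : ((innerSL ℝ (Cmp m π hπ gt)).comp jF) z = ⟪z.val, Cmp m π hπ gt⟫ := by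
          simp only [ContinuousLinearMap.comp_apply, innerSL_apply_apply]
          rw [hjF]
          exact real_inner_comm _ _
        rw [h4, h5] at h3
        exact h3
      have h6 := tendsto_nhds_unique h2 (h1.mono_left hUle)
      rw [h6, ← cmp_inner m π hπ ut gt]
    -- conclude
    have hD : Cmp m π hπ ut - z.val = Cmp m π hπ (ut - zt) := by
      rw [cmp_sub m π hπ ut zt, hzt2]
    have h6 : ⟪Cmp m π hπ ut - z.val, Cmp m π hπ ut - z.val⟫ = 0 := by
      calc ⟪Cmp m π hπ ut - z.val, Cmp m π hπ ut - z.val⟫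
          = ⟪Cmp m π hπ ut, Cmp m π hπ ut - z.val⟫
            - ⟪z.val, Cmp m π hπ ut - z.val⟫ := inner_sub_left _ _ _
        _ = 0 := by rw [hD, hcompat (ut - zt), sub_self]
    have h7 : Cmp m π hπ ut = z.val :=
      sub_eq_zero.mp (inner_self_eq_zero.mp h6)
    rw [h7]
    exact z.mem
  · -- ===================== (F2) =====================
    intro u ut hu hut hweak vt hvt
    set wth : HP H := ⟨Cmp m π hπ vt, hvt⟩ with hwth
    have hwthK : wth ∈ KK := hpullK vt hvt
    set yth : HP H := ⟨Cmp m π hπ ut, hut⟩ with hyth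
    have hythK : yth ∈ KK := hpullK ut hut
    -- Yosida approximations of wth in KK
    choose y hyK hyEq using fun j : ℕ => hYex ((j:ℝ)+1) (by positivity) wth hwthK
    -- energy estimates for the approximations
    have hq : ∀ j : ℕ, ‖y j - wth‖ ^ 2 + ((j:ℝ)+1) * ‖jF (y j) - jF wth‖ ^ 2
        ≤ K * ‖wth‖ * ‖y j - wth‖ := by
      intro j
      have hm : y j - wth ∈ KK := KK.sub_mem (hyK j) hwthK
      have hjq : jF (y j - wth) = jF (y j) - jF wth := map_sub jF _ _
      have h1 := hyEq j (y j - wth) hm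
      rw [hjq] at h1
      have h2 : aF (y j) (y j - wth)
          = -(((j:ℝ)+1) * ⟪jF (y j) - jF wth, jF (y j) - jF wth⟫) := by
        have e1 : ⟪jF wth, jF (y j) - jF wth⟫ - ⟪jF (y j), jF (y j) - jF wth⟫
            = -⟪jF (y j) - jF wth, jF (y j) - jF wth⟫ := by
          rw [← inner_sub_left, ← neg_sub (jF (y j)) (jF wth), inner_neg_left]
        nlinarith [h1, e1]
      have h3 : ‖y j - wth‖ ^ 2 = aF (y j) (y j - wth) - aF wth (y j - wth) := by
        rw [← haF_diag (y j - wth),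
          show aF (y j - wth) = aF (y j) - aF wth from map_sub aF _ _,
          ContinuousLinearMap.sub_apply]
      have h4 : -aF wth (y j - wth) ≤ K * ‖wth‖ * ‖y j - wth‖ := by
        have h5 : |aF wth (y j - wth)| ≤ K * ‖wth‖ * ‖y j - wth‖ := by
          rw [haF]
          exact haS_bound wth (y j - wth)
        linarith [neg_abs_le (aF wth (y j - wth))]
      have h6 : ⟪jF (y j) - jF wth, jF (y j) - jF wth⟫ = ‖jF (y j) - jF wth‖ ^ 2 :=
        real_inner_self_eq_norm_sq _
      nlinarith [h2, h3, h4, h6]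
    have hqW : ∀ j, ‖y j - wth‖ ≤ K * ‖wth‖ := by
      intro j
      apply hscal _ _ (norm_nonneg _) (mul_nonneg hK0 (norm_nonneg wth))
      have h1 := hq j
      have h2 : 0 ≤ ((j:ℝ)+1) * ‖jF (y j) - jF wth‖ ^ 2 := by positivity
      nlinarith
    have hyb : ∀ j, ‖y j‖ ≤ ‖wth‖ + K * ‖wth‖ := by
      intro j
      calc ‖y j‖ = ‖(y j - wth) + wth‖ := by rw [sub_add_cancel]
        _ ≤ ‖y j - wth‖ + ‖wth‖ := norm_add_le _ _
        _ ≤ ‖wth‖ + K * ‖wth‖ := by linarith [hqW j]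
    -- strong L² convergence of the approximations
    have hjL2sq : Tendsto (fun j => ‖jF (y j) - jF wth‖ ^ 2) atTop (𝓝 0) := by
      have hb : ∀ j : ℕ, ‖jF (y j) - jF wth‖ ^ 2 ≤ (K * ‖wth‖) ^ 2 * ((j:ℝ)+1)⁻¹ := by
        intro j
        have hj1 : (0:ℝ) < (j:ℝ)+1 := by positivity
        have h1 := hq j
        have h2 : ((j:ℝ)+1) * ‖jF (y j) - jF wth‖ ^ 2 ≤ (K * ‖wth‖) ^ 2 := by
          nlinarith [hqW j, sq_nonneg (‖y j - wth‖), norm_nonneg (y j - wth)]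
        calc ‖jF (y j) - jF wth‖ ^ 2
            = (((j:ℝ)+1) * ‖jF (y j) - jF wth‖ ^ 2) * ((j:ℝ)+1)⁻¹ := by
              field_simp
          _ ≤ (K * ‖wth‖) ^ 2 * ((j:ℝ)+1)⁻¹ :=
              mul_le_mul_of_nonneg_right h2 (le_of_lt (inv_pos.mpr hj1))
      have htd : Tendsto (fun j : ℕ => (K * ‖wth‖) ^ 2 * ((j:ℝ)+1)⁻¹) atTop (𝓝 0) := by
        have h3 : Tendsto (fun j : ℕ => ((j:ℝ)+1)⁻¹) atTop (𝓝 0) := by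
          have := tendsto_one_div_add_atTop_nhds_zero_nat (𝕜 := ℝ)
          simpa [one_div] using this
        have h4 := h3.const_mul ((K * ‖wth‖) ^ 2)
        rw [mul_zero] at h4
        exact h4
      exact squeeze_zero (fun j => sq_nonneg _) hb htd
    have hjL2 : Tendsto (fun j => ‖jF (y j) - jF wth‖) atTop (𝓝 0) := by
      have hfn : (fun j => ‖jF (y j) - jF wth‖)
          = fun j => Real.sqrt (‖jF (y j) - jF wth‖ ^ 2) := by
        funext j; rw [Real.sqrt_sq (norm_nonneg _)]
      rw [hfn]
      have := (Real.continuous_sqrt.tendsto 0).comp hjL2sq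
      simpa [Function.comp_def] using this
    -- convergence against continuous functionals on the H-Hilbert space
    have hstrong : ∀ f : HP H →L[ℝ] ℝ, Tendsto (fun j => f (y j)) atTop (𝓝 (f wth)) :=
      fun f => tendsto_clm_of_bounded jF hjinj y wth (‖wth‖ + K * ‖wth‖) hyb hjL2 f
    -- the sources, projected to pullbacks
    set gP : ℕ → Lp ℝ 2 m := fun j =>
      Cmp m π hπ (P (((j:ℝ)+1) • (jF wth - jF (y j)))) with hgPdef
    have hgeq : ∀ j, ∀ φ : HP H, φ ∈ KK → aF (y j) φ = ⟪gP j, jF φ⟫ := by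
      intro j φ hφ
      have h1 := hyEq j φ hφ
      have h2 : ⟪((j:ℝ)+1) • (jF wth - jF (y j)), jF φ⟫
          = ((j:ℝ)+1) * ⟪jF wth, jF φ⟫ - ((j:ℝ)+1) * ⟪jF (y j), jF φ⟫ := by
        rw [real_inner_smul_left, inner_sub_left]
        ring
      have h3 := hP (((j:ℝ)+1) • (jF wth - jF (y j))) φ hφ
      have hjφ : jF φ = φ.val := hjF φ
      calc aF (y j) φ
          = ((j:ℝ)+1) * ⟪jF wth, jF φ⟫ - ((j:ℝ)+1) * ⟪jF (y j), jF φ⟫ := by linarith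
        _ = ⟪((j:ℝ)+1) • (jF wth - jF (y j)), jF φ⟫ := h2.symm
        _ = ⟪((j:ℝ)+1) • (jF wth - jF (y j)), φ.val⟫ := by rw [hjφ]
        _ = ⟪gP j, φ.val⟫ := by rw [hgPdef]; exact h3.symm
        _ = ⟪gP j, jF φ⟫ := by rw [hjφ]
    -- pullback representatives of the y j
    choose yt hyt1 hyt2 using fun j => hKpull (y j) (hyK j)
    -- the strong solutions converge to y j as n → ∞
    have hVconv : ∀ j, Tendsto (fun n => ‖V (κ n) (gP j) - y j‖) atTop (𝓝 0) :=
      fun j => hS1 (gP j) (y j) (hyK j) (fun φ hφ => hgeq j φ hφ)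
    have hVL2 : ∀ j, Tendsto (fun n => ‖(V (κ n) (gP j)).val - (y j).val‖) atTop (𝓝 0) := by
      intro j
      apply squeeze_zero (fun n => norm_nonneg _) (fun n => ?_) (hVconv j)
      have h1 : (V (κ n) (gP j)).val - (y j).val = (V (κ n) (gP j) - y j).val := rfl
      rw [h1]
      exact hvalnorm _
    -- limit of the energies for fixed j
    have helim : ∀ j, Tendsto (fun n => E (V (κ n) (gP j)).val (u n)
        + κ n * Ea (V (κ n) (gP j)).val (u n)) atTop
        (𝓝 (⟪gP j, Cmp m π hπ ut⟫ - (α₀+1) * ⟪(y j).val, Cmp m π hπ ut⟫)) := by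
      intro j
      have hid : ∀ n, E (V (κ n) (gP j)).val (u n) + κ n * Ea (V (κ n) (gP j)).val (u n)
          = ⟪gP j, u n⟫ - (α₀+1) * ⟪(V (κ n) (gP j)).val, u n⟫ := by
        intro n
        have h1 : E (V (κ n) (gP j)).val (u n)
            + (α₀+1) * ⟪(V (κ n) (gP j)).val, u n⟫
            + κ n * Ea (V (κ n) (gP j)).val (u n) = ⟪gP j, u n⟫ :=
          hV (κ n) (gP j) ⟨u n, hu n⟩
        linarith
      have L1 : Tendsto (fun n => ⟪gP j, u n⟫) atTop (𝓝 ⟪gP j, Cmp m π hπ ut⟫) := by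
        have hprem : Tendsto (fun n : ℕ =>
            ‖Cmp m π hπ (P (((j:ℝ)+1) • (jF wth - jF (y j)))) - gP j‖) atTop (𝓝 0) := by
          have h2 : (fun n : ℕ =>
              ‖Cmp m π hπ (P (((j:ℝ)+1) • (jF wth - jF (y j)))) - gP j‖)
              = fun _ => 0 := by
            funext n
            rw [hgPdef, sub_self, norm_zero]
          rw [h2]
          exact tendsto_const_nhds
        have h1 := hweak (fun _ => gP j) (P (((j:ℝ)+1) • (jF wth - jF (y j)))) hprem
        have h3 : (⟪ut, P (((j:ℝ)+1) • (jF wth - jF (y j)))⟫ : ℝ)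
            = ⟪gP j, Cmp m π hπ ut⟫ := by
          rw [← cmp_inner m π hπ ut (P (((j:ℝ)+1) • (jF wth - jF (y j))))]
          rw [real_inner_comm]
        rw [h3] at h1
        have h4 : (fun n => (⟪u n, gP j⟫ : ℝ)) = fun n => ⟪gP j, u n⟫ := by
          funext n; exact real_inner_comm _ _
        rw [h4] at h1
        exact h1
      have L2 : Tendsto (fun n => ⟪(V (κ n) (gP j)).val, u n⟫) atTop
          (𝓝 ⟪(y j).val, Cmp m π hπ ut⟫) := by
        have hprem : Tendsto (fun n =>
            ‖Cmp m π hπ (yt j) - (V (κ n) (gP j)).val‖) atTop (𝓝 0) := by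
          have h2 : (fun n => ‖Cmp m π hπ (yt j) - (V (κ n) (gP j)).val‖)
              = fun n => ‖(V (κ n) (gP j)).val - (y j).val‖ := by
            funext n
            rw [← hyt2 j, norm_sub_rev]
          rw [h2]
          exact hVL2 j
        have h1 := hweak (fun n => (V (κ n) (gP j)).val) (yt j) hprem
        have h3 : (⟪ut, yt j⟫ : ℝ) = ⟪(y j).val, Cmp m π hπ ut⟫ := by
          rw [← cmp_inner m π hπ ut (yt j), real_inner_comm, ← hyt2 j]
        rw [h3] at h1
        have h4 : (fun n => (⟪u n, (V (κ n) (gP j)).val⟫ : ℝ))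
            = fun n => ⟪(V (κ n) (gP j)).val, u n⟫ := by
          funext n; exact real_inner_comm _ _
        rw [h4] at h1
        exact h1
      have hfn : (fun n => E (V (κ n) (gP j)).val (u n)
          + κ n * Ea (V (κ n) (gP j)).val (u n))
          = fun n => ⟪gP j, u n⟫ - (α₀+1) * ⟪(V (κ n) (gP j)).val, u n⟫ := by
        funext n; exact hid n
      rw [hfn]
      exact L1.sub (L2.const_mul (α₀+1))
    -- the limiting values converge to the target
    set Tj : ℕ → ℝ := fun j =>
      ⟪gP j, Cmp m π hπ ut⟫ - (α₀+1) * ⟪(y j).val, Cmp m π hπ ut⟫ with hTjdef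
    have hTrw : ∀ j, Tj j = aF (y j) yth - (α₀+1) * ⟪jF (y j), jF yth⟫ := by
      intro j
      have h1 : aF (y j) yth = ⟪gP j, jF yth⟫ := hgeq j yth hythK
      have h2 : jF yth = Cmp m π hπ ut := rfl
      have h3 : jF (y j) = (y j).val := rfl
      rw [hTjdef]
      simp only
      rw [h1, h2, h3]
    have hTlim : Tendsto Tj atTop (𝓝 (E (Cmp m π hπ vt) (Cmp m π hπ ut))) := by
      have h2 := hstrong (aF.flip yth)
      have h2' : Tendsto (fun j => aF (y j) yth) atTop (𝓝 (aF wth yth)) := by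
        have h5 : (fun j => (aF.flip yth) (y j)) = fun j => aF (y j) yth := by
          funext j; rw [ContinuousLinearMap.flip_apply]
        have h6 : (aF.flip yth) wth = aF wth yth := ContinuousLinearMap.flip_apply _ _ _
        rw [h5, h6] at h2
        exact h2
      have h3 : Tendsto (fun j => (⟪jF (y j), jF yth⟫ : ℝ)) atTop
          (𝓝 ⟪jF wth, jF yth⟫) := by
        have hb2 : Tendsto (fun j => (⟪jF (y j) - jF wth, jF yth⟫ : ℝ)) atTop (𝓝 0) := by
          apply squeeze_zero_norm (fun j => ?_) (by simpa using hjL2.const_mul ‖jF yth‖)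
          calc ‖(⟪jF (y j) - jF wth, jF yth⟫ : ℝ)‖
              ≤ ‖jF (y j) - jF wth‖ * ‖jF yth‖ := norm_inner_le_norm _ _
            _ = ‖jF yth‖ * ‖jF (y j) - jF wth‖ := by ring
        have hb3 := hb2.add (tendsto_const_nhds (x := (⟪jF wth, jF yth⟫ : ℝ)))
        rw [zero_add] at hb3
        have hb4 : (fun j => (⟪jF (y j) - jF wth, jF yth⟫ : ℝ) + ⟪jF wth, jF yth⟫)
            = fun j => ⟪jF (y j), jF yth⟫ := by
          funext j
          rw [inner_sub_left]
          ring
        rw [hb4] at hb3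
        exact hb3
      have h4 : aF wth yth - (α₀+1) * ⟪jF wth, jF yth⟫
          = E (Cmp m π hπ vt) (Cmp m π hπ ut) := by
        have e1 : aF wth yth = E (Cmp m π hπ vt) (Cmp m π hπ ut)
            + (α₀+1) * ⟪Cmp m π hπ vt, Cmp m π hπ ut⟫ := rfl
        have e2 : jF wth = Cmp m π hπ vt := rfl
        have e3 : jF yth = Cmp m π hπ ut := rfl
        rw [e1, e2, e3]
        ring
      have h5 : Tj = fun j => aF (y j) yth - (α₀+1) * ⟪jF (y j), jF yth⟫ :=
        funext hTrw
      rw [h5, ← h4]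
      exact h2'.sub (h3.const_mul (α₀+1))
    -- distance of approximation
    set d : ℕ → ℝ := fun j => ‖Cmp m π hπ vt - (y j).val‖ with hddef
    have hd0 : Tendsto d atTop (𝓝 0) := by
      have h1 : d = fun j => ‖jF (y j) - jF wth‖ := by
        funext j
        rw [hddef]
        simp only
        rw [show (Cmp m π hπ vt : Lp ℝ 2 m) = jF wth from rfl, norm_sub_rev, hjF (y j)]
      rw [h1]
      exact hjL2
    -- eventual estimates for fixed j
    have hEv : ∀ j : ℕ, ∀ᶠ n in atTop,
        ‖Cmp m π hπ vt - (V (κ n) (gP j)).val‖ ≤ d j + 1/((j:ℝ)+1) ∧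
        |E (V (κ n) (gP j)).val (u n) + κ n * Ea (V (κ n) (gP j)).val (u n) - Tj j|
          ≤ 1/((j:ℝ)+1) := by
      intro j
      have hj1 : (0:ℝ) < 1/((j:ℝ)+1) := by positivity
      have h1 : ∀ᶠ n in atTop,
          ‖(V (κ n) (gP j)).val - (y j).val‖ < 1/((j:ℝ)+1) := by
        have := hVL2 j
        exact this.eventually_lt_const hj1
      have h2 : ∀ᶠ n in atTop,
          |E (V (κ n) (gP j)).val (u n) + κ n * Ea (V (κ n) (gP j)).val (u n) - Tj j|
            < 1/((j:ℝ)+1) := by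
        have h3 := Metric.tendsto_nhds.mp (helim j) (1/((j:ℝ)+1)) hj1
        apply h3.mono
        intro n hn
        rw [Real.dist_eq] at hn
        exact hn
      filter_upwards [h1, h2] with n hn1 hn2
      constructor
      · have h4 := dist_triangle (Cmp m π hπ vt) ((y j).val) ((V (κ n) (gP j)).val)
        rw [dist_eq_norm, dist_eq_norm, dist_eq_norm] at h4
        have h5 : ‖(y j).val - (V (κ n) (gP j)).val‖
            = ‖(V (κ n) (gP j)).val - (y j).val‖ := norm_sub_rev _ _
        rw [h5] at h4
        exact le_trans h4 (by rw [hddef]; simp only; linarith)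
      · exact le_of_lt hn2
    -- diagonalization
    choose NN hNN using fun j => Filter.eventually_atTop.mp (hEv j)
    set N : ℕ → ℕ := fun j => Nat.rec (NN 0) (fun j' prev => max (NN (j'+1)) (prev+1)) j
      with hNdef
    have hNzero : N 0 = NN 0 := rfl
    have hNsucc : ∀ j, N (j+1) = max (NN (j+1)) (N j + 1) := fun j => rfl
    have hNNle : ∀ j, NN j ≤ N j := by
      intro j
      cases j with
      | zero => exact le_of_eq hNzero.symm
      | succ j' => rw [hNsucc j']; exact le_max_left _ _
    have hNmono : ∀ j, N j < N (j+1) := by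
      intro j
      rw [hNsucc j]
      exact lt_of_lt_of_le (Nat.lt_succ_self _) (le_max_right _ _)
    have hNj : ∀ j, j ≤ N j := by
      intro j
      induction j with
      | zero => exact Nat.zero_le _
      | succ j' ih => exact Nat.succ_le_of_lt (lt_of_le_of_lt ih (hNmono j'))
    set jn : ℕ → ℕ := fun n => Nat.findGreatest (fun j => N j ≤ n) n with hjndef
    have hjn1 : ∀ n, N 0 ≤ n → N (jn n) ≤ n := by
      intro n hn
      exact Nat.findGreatest_spec (P := fun j => N j ≤ n) (Nat.zero_le n) hn
    have hjn2 : ∀ j n, N j ≤ n → j ≤ jn n :=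
      fun j n hn => Nat.le_findGreatest (le_trans (hNj j) hn) hn
    have hjntop : Tendsto jn atTop atTop := by
      rw [tendsto_atTop_atTop]
      intro b
      exact ⟨N b, fun n hn => hjn2 b n hn⟩
    refine ⟨fun n => (V (κ n) (gP (jn n))).val, fun n => (V (κ n) (gP (jn n))).mem, ?_, ?_⟩
    · -- strong L² convergence of the diagonal sequence
      apply squeeze_zero' (Eventually.of_forall (fun n => norm_nonneg _))
        (g := fun n => d (jn n) + 1/((jn n : ℝ)+1)) ?_ ?_
      · filter_upwards [Filter.eventually_ge_atTop (N 0)] with n hn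
        have h1 := hNN (jn n) n (le_trans (hNNle (jn n)) (hjn1 n hn))
        exact h1.1
      · have h2 := hd0.comp hjntop
        have h3 : Tendsto (fun n => 1/((jn n : ℝ)+1)) atTop (𝓝 0) :=
          tendsto_one_div_add_atTop_nhds_zero_nat.comp hjntop
        have h4 := h2.add h3
        rw [add_zero] at h4
        exact h4
    · -- convergence of the energies of the diagonal sequence
      have habs : Tendsto (fun n =>
          |E (V (κ n) (gP (jn n))).val (u n) + κ n * Ea (V (κ n) (gP (jn n))).val (u n)
            - E (Cmp m π hπ vt) (Cmp m π hπ ut)|) atTop (𝓝 0) := by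
        apply squeeze_zero' (Eventually.of_forall (fun n => abs_nonneg _))
          (g := fun n => |Tj (jn n) - E (Cmp m π hπ vt) (Cmp m π hπ ut)|
            + 1/((jn n : ℝ)+1)) ?_ ?_
        · filter_upwards [Filter.eventually_ge_atTop (N 0)] with n hn
          have h1 := (hNN (jn n) n (le_trans (hNNle (jn n)) (hjn1 n hn))).2
          have h2 := abs_sub_le
            (E (V (κ n) (gP (jn n))).val (u n)
              + κ n * Ea (V (κ n) (gP (jn n))).val (u n))
            (Tj (jn n)) (E (Cmp m π hπ vt) (Cmp m π hπ ut))
          linarith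
        · have h2 : Tendsto (fun n => |Tj (jn n) - E (Cmp m π hπ vt) (Cmp m π hπ ut)|)
              atTop (𝓝 0) := by
            have h3 := (hTlim.comp hjntop).sub
              (tendsto_const_nhds (x := E (Cmp m π hπ vt) (Cmp m π hπ ut)))
            rw [sub_self] at h3
            have h4 := h3.abs
            rw [abs_zero] at h4
            exact h4
          have h5 : Tendsto (fun n => 1/((jn n : ℝ)+1)) atTop (𝓝 0) :=
            tendsto_one_div_add_atTop_nhds_zero_nat.comp hjntop
          have h6 := h2.add h5
          rw [add_zero] at h6
          exact h6
      rw [tendsto_iff_dist_tendsto_zero]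
      have h7 : (fun n => dist
          (E (V (κ n) (gP (jn n))).val (u n) + κ n * Ea (V (κ n) (gP (jn n))).val (u n))
          (E (Cmp m π hπ vt) (Cmp m π hπ ut)))
          = fun n => |E (V (κ n) (gP (jn n))).val (u n)
            + κ n * Ea (V (κ n) (gP (jn n))).val (u n)
            - E (Cmp m π hπ vt) (Cmp m π hπ ut)| := by
        funext n; exact Real.dist_eq _ _
      rw [h7]
      exact habs

end
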